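/- In the noiseless case p = 0, for every sorted probability distribution p_1 ≥ ⋯ ≥ p_N ≥ 0 the optimal one-query guessing time satisfies G(X)/2 + 1/4 ≤ G_opt(X) ≤ G(X)/2 + 1/2. -/

import Mathlib

open Finset

noncomputable def guess (N : ℕ) (q : Fin N → ℝ) : ℝ :=
  Finset.univ.inf' ⟨1, Finset.mem_univ 1⟩
    (fun σ : Equiv.Perm (Fin N) => ∑ k : Fin N, ((k : ℝ) + 1) * q (σ k))

noncomputable def guessA (N : ℕ) (q : Fin N → ℝ) (p : ℝ) (A : Finset (Fin N)) : ℝ :=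
  ∑ y : Bool, Finset.univ.inf' ⟨1, Finset.mem_univ 1⟩
    (fun σ : Equiv.Perm (Fin N) => ∑ k : Fin N,
      ((k : ℝ) + 1) * q (σ k) * (if ((σ k ∈ A) ↔ (y = true)) then 1 - p else p))

noncomputable def guessOpt (N : ℕ) (q : Fin N → ℝ) (p : ℝ) : ℝ :=
  Finset.univ.inf' ⟨∅, Finset.mem_univ ∅⟩ (fun A : Finset (Fin N) => guessA N q p A)

def zigzag (N : ℕ) : Finset (Fin N) := Finset.univ.filter (fun k => (k : ℕ) % 2 = 0)

noncomputable def wt (N : ℕ) (q : Fin N → ℝ) (p : ℝ) (i j : Fin N) : ℝ :=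
  max 0 ((1 - p) * min (q i) (q j) - p * max (q i) (q j))

noncomputable def cut (N : ℕ) (q : Fin N → ℝ) (p : ℝ) (A : Finset (Fin N)) : ℝ :=
  ∑ i ∈ A, ∑ j ∈ Aᶜ, wt N q p i j

noncomputable def maxcut (N : ℕ) (q : Fin N → ℝ) (p : ℝ) : ℝ :=
  Finset.univ.sup' ⟨∅, Finset.mem_univ ∅⟩ (fun A : Finset (Fin N) => cut N q p A)

/-- Split a range-sum into even and odd indices. -/
lemma lem_reindex (h : ℕ → ℝ) : ∀ N : ℕ, ∑ i ∈ range N, h i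
    = ∑ t ∈ range ((N+1)/2), h (2*t) + ∑ t ∈ range (N/2), h (2*t+1) := by
  intro N
  induction N with
  | zero => simp
  | succ n ih =>
    rw [Finset.sum_range_succ, ih]
    obtain ⟨m, hm⟩ | ⟨m, hm⟩ := Nat.even_or_odd n
    · have e1 : (n + 1 + 1)/2 = m + 1 := by omega
      have e2 : (n+1)/2 = m := by omega
      have e3 : n/2 = m := by omega
      have e4 : n = 2*m := by omega
      rw [e1, e2, e3, Finset.sum_range_succ (fun t => h (2*t)) m, e4]
      ring
    · have e1 : (n + 1 + 1)/2 = m + 1 := by omega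
      have e2 : (n+1)/2 = m + 1 := by omega
      have e3 : n/2 = m := by omega
      have e4 : n = 2*m+1 := by omega
      rw [e1, e2, e3, Finset.sum_range_succ (fun t => h (2*t+1)) m, e4]
      ring

/-- Tail-sum lower bound: a subset of `range N` of size `m` has `g`-sum at least the
sum over the top `m` indices, when `g` is antitone and nonnegative. -/
lemma lem_tail (g : ℕ → ℝ) (hmono : ∀ i j : ℕ, i ≤ j → g j ≤ g i) (hnn : ∀ i, 0 ≤ g i) :
    ∀ N : ℕ, ∀ S : Finset ℕ, S ⊆ range N →
      ∑ i ∈ Finset.Ico (N - S.card) N, g i ≤ ∑ i ∈ S, g i := by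
  intro N
  induction N with
  | zero =>
    intro S hS
    have : S = ∅ := Finset.subset_empty.mp (by simpa using hS)
    simp [this]
  | succ n ih =>
    intro S hS
    by_cases hemp : S = ∅
    · simp [hemp]
    have hpos : 1 ≤ S.card := Finset.card_pos.mpr (Finset.nonempty_of_ne_empty hemp)
    by_cases hn : n ∈ S
    · have hS' : S.erase n ⊆ range n := by
        intro x hx
        have hx1 := hS (Finset.mem_of_mem_erase hx)
        have hx2 := Finset.ne_of_mem_erase hx
        simp only [Finset.mem_range] at hx1 ⊢
        omega
      have hcard : (S.erase n).card = S.card - 1 := Finset.card_erase_of_mem hn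
      have h1 : ∑ i ∈ Finset.Ico (n + 1 - S.card) (n+1), g i
          = ∑ i ∈ Finset.Ico (n + 1 - S.card) n, g i + g n :=
        Finset.sum_Ico_succ_top (by omega) g
      have h2 : n + 1 - S.card = n - (S.erase n).card := by omega
      have h3 := ih (S.erase n) hS'
      have h4 : ∑ i ∈ S.erase n, g i + g n = ∑ i ∈ S, g i := Finset.sum_erase_add S g hn
      rw [h1, h2, ← h4]
      linarith
    · have hS' : S ⊆ range n := by
        intro x hx
        have hx1 := hS hx
        have hx2 : x ≠ n := fun h => hn (h ▸ hx)
        simp only [Finset.mem_range] at hx1 ⊢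
        omega
      have hcn : S.card ≤ n := by
        have := Finset.card_le_card hS'
        simpa using this
      have h1 : ∑ i ∈ Finset.Ico (n + 1 - S.card) (n+1), g i
          = ∑ i ∈ Finset.Ico (n + 1 - S.card) n, g i + g n :=
        Finset.sum_Ico_succ_top (by omega) g
      have h2 : ∑ i ∈ Finset.Ico (n - S.card) n, g i
          = g (n - S.card) + ∑ i ∈ Finset.Ico (n - S.card + 1) n, g i :=
        Finset.sum_eq_sum_Ico_succ_bot (by omega) g
      have h3 : n - S.card + 1 = n + 1 - S.card := by omega
      have h5 : g n ≤ g (n - S.card) := hmono _ _ (by omega)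
      have h6 := ih S hS'
      rw [h1]
      rw [h2, h3] at h6
      linarith

/-- Layer-cake key lemma. -/
lemma lem_key (g : ℕ → ℝ) (hmono : ∀ i j : ℕ, i ≤ j → g j ≤ g i) (hnn : ∀ i, 0 ≤ g i)
    (N : ℕ) (C : ℕ → ℕ)
    (hCN : ∀ i ∈ range N, C i ≤ N)
    (hcard : ∀ t : ℕ, ((range N).filter (fun i => C i ≤ t)).card ≤ 2*t) :
    ∑ i ∈ range N, (↑(i/2 + 1) : ℝ) * g i ≤ ∑ i ∈ range N, (C i : ℝ) * g i := by
  have expand : ∀ c : ℕ, c ≤ N → ∀ x : ℝ,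
      (c : ℝ) * x = ∑ t ∈ range N, (if t < c then x else 0) := by
    intro c hc x
    rw [← Finset.sum_filter]
    have : (range N).filter (fun t => t < c) = range c := by
      ext t; simp only [Finset.mem_filter, Finset.mem_range]; omega
    rw [this, Finset.sum_const, nsmul_eq_mul, Finset.card_range]
  have hL : ∑ i ∈ range N, (↑(i/2 + 1) : ℝ) * g i
      = ∑ t ∈ range N, ∑ i ∈ range N, (if t < i/2 + 1 then g i else 0) := by
    rw [← Finset.sum_comm]
    apply Finset.sum_congr rfl
    intro i hi
    exact expand _ (by simp only [Finset.mem_range] at hi; omega) _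
  have hR : ∑ i ∈ range N, (C i : ℝ) * g i
      = ∑ t ∈ range N, ∑ i ∈ range N, (if t < C i then g i else 0) := by
    rw [← Finset.sum_comm]
    apply Finset.sum_congr rfl
    intro i hi
    exact expand _ (hCN i hi) _
  rw [hL, hR]
  apply Finset.sum_le_sum
  intro t _
  rw [← Finset.sum_filter, ← Finset.sum_filter]
  have hcS : N - ((range N).filter (fun i => t < C i)).card ≤ 2*t := by
    have h1 : ((range N).filter (fun i => ¬ t < C i)) = (range N).filter (fun i => C i ≤ t) := by
      apply Finset.filter_congr; intro x _; simp [not_lt]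
    have h2 := Finset.card_filter_add_card_filter_not
      (s := range N) (p := fun i => t < C i)
    rw [h1] at h2
    have h3 := hcard t
    have h4 : (range N).card = N := Finset.card_range N
    rw [h4] at h2
    omega
  have hfilt : (range N).filter (fun i => t < i/2 + 1) = Finset.Ico (2*t) N := by
    ext x
    simp only [Finset.mem_filter, Finset.mem_range, Finset.mem_Ico]
    omega
  rw [hfilt]
  have hsub : Finset.Ico (2*t) N ⊆
      Finset.Ico (N - ((range N).filter (fun i => t < C i)).card) N := by
    intro x hx
    simp only [Finset.mem_Ico] at hx ⊢
    omega
  calc ∑ i ∈ Finset.Ico (2*t) N, g i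
      ≤ ∑ i ∈ Finset.Ico (N - ((range N).filter (fun i => t < C i)).card) N, g i :=
        Finset.sum_le_sum_of_subset_of_nonneg hsub (fun i _ _ => hnn i)
    _ ≤ ∑ i ∈ (range N).filter (fun i => t < C i), g i :=
        lem_tail g hmono hnn N _ (Finset.filter_subset _ _)

theorem stmt_5 (N : ℕ) (hN : 1 ≤ N) (q : Fin N → ℝ)
    (hnn : ∀ i, 0 ≤ q i) (hsum : ∑ i, q i = 1)
    (hsort : ∀ i j : Fin N, i ≤ j → q j ≤ q i) :
    guess N q / 2 + 1 / 4 ≤ guessOpt N q 0 ∧ guessOpt N q 0 ≤ guess N q / 2 + 1 / 2 := by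
  classical
  set g : ℕ → ℝ := fun i => if h : i < N then q ⟨i, h⟩ else 0 with hgdef
  have gq : ∀ k : Fin N, q k = g k := by
    intro k
    simp only [hgdef, k.isLt, dif_pos, Fin.eta]
  have gmono : ∀ i j : ℕ, i ≤ j → g j ≤ g i := by
    intro i j hij
    by_cases hj : j < N
    · have hi : i < N := lt_of_le_of_lt hij hj
      simp only [hgdef, dif_pos hi, dif_pos hj]
      exact hsort ⟨i, hi⟩ ⟨j, hj⟩ hij
    · simp only [hgdef, dif_neg hj]
      by_cases hi : i < N
      · simp only [dif_pos hi]; exact hnn _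
      · simp [dif_neg hi]
  have gnn : ∀ i, 0 ≤ g i := by
    intro i
    by_cases hi : i < N
    · simp only [hgdef, dif_pos hi]; exact hnn _
    · simp [hgdef, dif_neg hi]
  have gsum : ∑ i ∈ range N, g i = 1 := by
    rw [← Fin.sum_univ_eq_sum_range g N, ← hsum]
    exact Finset.sum_congr rfl (fun k _ => (gq k).symm)
  -- guess bounds
  have hguess_le : guess N q ≤ ∑ i ∈ range N, ((i : ℝ) + 1) * g i := by
    have h1 : guess N q ≤ ∑ k : Fin N, ((k : ℝ) + 1) * q ((1 : Equiv.Perm (Fin N)) k) :=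
      Finset.inf'_le _ (Finset.mem_univ _)
    calc guess N q ≤ ∑ k : Fin N, ((k : ℝ) + 1) * q ((1 : Equiv.Perm (Fin N)) k) := h1
      _ = ∑ k : Fin N, ((k : ℝ) + 1) * g k := by
          apply Finset.sum_congr rfl
          intro k _
          rw [Equiv.Perm.one_apply, gq]
      _ = ∑ i ∈ range N, ((i : ℝ) + 1) * g i :=
          Fin.sum_univ_eq_sum_range (fun i => ((i : ℝ) + 1) * g i) N
  have hguess_ge : ∑ i ∈ range N, ((i : ℝ) + 1) * g i ≤ guess N q := by
    apply Finset.le_inf'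
    intro σ _
    have hA : Antivary (fun k : Fin N => (k : ℝ) + 1) q := by
      intro i j hlt
      show ((j : ℕ) : ℝ) + 1 ≤ ((i : ℕ) : ℝ) + 1
      have hji : j ≤ i := by
        by_contra hc
        push_neg at hc
        exact absurd (hsort i j hc.le) (not_le.mpr hlt)
      have : (j : ℝ) ≤ (i : ℝ) := by exact_mod_cast hji
      linarith
    have h2 := hA.sum_mul_le_sum_mul_comp_perm (σ := σ)
    calc ∑ i ∈ range N, ((i : ℝ) + 1) * g i
        = ∑ k : Fin N, ((k : ℝ) + 1) * q k := by
          rw [← Fin.sum_univ_eq_sum_range (fun i => ((i : ℝ) + 1) * g i) N]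
          exact Finset.sum_congr rfl (fun k _ => by rw [gq])
      _ ≤ ∑ k : Fin N, ((k : ℝ) + 1) * q (σ k) := h2
  -- the interleaving permutations
  let fe : Fin N → Fin N := fun k =>
    if h : 2 * (k : ℕ) < N then ⟨2 * k, h⟩
    else ⟨2 * ((k : ℕ) - (N+1)/2) + 1, by have := k.isLt; omega⟩
  have fe_inj : Function.Injective fe := by
    intro a b hab
    have ha := a.isLt
    have hb := b.isLt
    apply Fin.ext
    simp only [fe] at hab
    split_ifs at hab with h1 h2 h2 <;>
      (have := congrArg Fin.val hab; simp only [] at this; omega)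
  let σe : Equiv.Perm (Fin N) :=
    Equiv.ofBijective fe (Finite.injective_iff_bijective.mp fe_inj)
  have σe_apply : ∀ k, σe k = fe k := fun k => rfl
  let fo : Fin N → Fin N := fun k =>
    if h : 2 * (k : ℕ) + 1 < N then ⟨2 * k + 1, h⟩
    else ⟨2 * ((k : ℕ) - N/2), by have := k.isLt; omega⟩
  have fo_inj : Function.Injective fo := by
    intro a b hab
    have ha := a.isLt
    have hb := b.isLt
    apply Fin.ext
    simp only [fo] at hab
    split_ifs at hab with h1 h2 h2 <;>
      (have := congrArg Fin.val hab; simp only [] at this; omega)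
  let σo : Equiv.Perm (Fin N) :=
    Equiv.ofBijective fo (Finite.injective_iff_bijective.mp fo_inj)
  have σo_apply : ∀ k, σo k = fo k := fun k => rfl
  -- evaluate the two branches of guessA at zigzag
  have hvtrue : (∑ k : Fin N, ((k : ℝ) + 1) * q (σe k) *
      (if ((σe k ∈ zigzag N) ↔ (true = true)) then 1 - (0:ℝ) else 0))
      = ∑ t ∈ range ((N+1)/2), ((t : ℝ) + 1) * g (2*t) := by
    have hterm : ∀ k : Fin N, ((k : ℝ) + 1) * q (σe k) *
        (if ((σe k ∈ zigzag N) ↔ (true = true)) then 1 - (0:ℝ) else 0)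
        = (if 2 * (k:ℕ) < N then ((k : ℝ) + 1) * g (2*(k:ℕ)) else 0) := by
      intro k
      rw [σe_apply]
      by_cases h : 2 * (k : ℕ) < N
      · have hfe : fe k = ⟨2 * k, h⟩ := dif_pos h
        rw [hfe, if_pos h]
        have hmem : (⟨2 * (k:ℕ), h⟩ : Fin N) ∈ zigzag N := by
          simp [zigzag, Nat.mul_mod_right]
        rw [if_pos (iff_of_true hmem rfl)]
        rw [gq ⟨2 * (k:ℕ), h⟩]
        ring
      · have hfe : fe k = ⟨2 * ((k : ℕ) - (N+1)/2) + 1, by have := k.isLt; omega⟩ :=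
          dif_neg h
        rw [hfe, if_neg h]
        have hmem : (⟨2 * ((k : ℕ) - (N+1)/2) + 1, by have := k.isLt; omega⟩ : Fin N)
            ∉ zigzag N := by
          simp [zigzag]
        rw [if_neg (by simp [hmem])]
        ring
    rw [Finset.sum_congr rfl (fun k _ => hterm k)]
    rw [Fin.sum_univ_eq_sum_range (fun i => if 2 * i < N then ((i : ℝ) + 1) * g (2*i) else 0) N]
    rw [← Finset.sum_filter]
    have : (range N).filter (fun i => 2 * i < N) = range ((N+1)/2) := by
      ext x; simp only [Finset.mem_filter, Finset.mem_range]; omega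
    rw [this]
  have hvfalse : (∑ k : Fin N, ((k : ℝ) + 1) * q (σo k) *
      (if ((σo k ∈ zigzag N) ↔ (false = true)) then 1 - (0:ℝ) else 0))
      = ∑ t ∈ range (N/2), ((t : ℝ) + 1) * g (2*t+1) := by
    have hterm : ∀ k : Fin N, ((k : ℝ) + 1) * q (σo k) *
        (if ((σo k ∈ zigzag N) ↔ (false = true)) then 1 - (0:ℝ) else 0)
        = (if 2 * (k:ℕ) + 1 < N then ((k : ℝ) + 1) * g (2*(k:ℕ)+1) else 0) := by
      intro k
      rw [σo_apply]
      by_cases h : 2 * (k : ℕ) + 1 < N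
      · have hfo : fo k = ⟨2 * k + 1, h⟩ := dif_pos h
        rw [hfo, if_pos h]
        have hmem : (⟨2 * (k:ℕ) + 1, h⟩ : Fin N) ∉ zigzag N := by
          simp [zigzag]
        rw [if_pos (by simp [hmem])]
        rw [gq ⟨2 * (k:ℕ) + 1, h⟩]
        ring
      · have hfo : fo k = ⟨2 * ((k : ℕ) - N/2), by have := k.isLt; omega⟩ :=
          dif_neg h
        rw [hfo, if_neg h]
        have hmem : (⟨2 * ((k : ℕ) - N/2), by have := k.isLt; omega⟩ : Fin N)
            ∈ zigzag N := by
          simp [zigzag, Nat.mul_mod_right]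
        rw [if_neg (by simp [hmem])]
        ring
    rw [Finset.sum_congr rfl (fun k _ => hterm k)]
    rw [Fin.sum_univ_eq_sum_range
      (fun i => if 2 * i + 1 < N then ((i : ℝ) + 1) * g (2*i+1) else 0) N]
    rw [← Finset.sum_filter]
    have : (range N).filter (fun i => 2 * i + 1 < N) = range (N/2) := by
      ext x; simp only [Finset.mem_filter, Finset.mem_range]; omega
    rw [this]
  -- Shalf
  have hre : ∑ i ∈ range N, (↑(i/2 + 1) : ℝ) * g i
      = ∑ t ∈ range ((N+1)/2), ((t : ℝ) + 1) * g (2*t)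
        + ∑ t ∈ range (N/2), ((t : ℝ) + 1) * g (2*t+1) := by
    rw [lem_reindex (fun i => (↑(i/2 + 1) : ℝ) * g i) N]
    congr 1
    · apply Finset.sum_congr rfl
      intro t _
      have : 2 * t / 2 = t := by omega
      rw [this]
      push_cast
      ring
    · apply Finset.sum_congr rfl
      intro t _
      have : (2 * t + 1) / 2 = t := by omega
      rw [this]
      push_cast
      ring
  -- upper bound
  have hupper : guessOpt N q 0 ≤ guess N q / 2 + 1 / 2 := by
    have h0 : guessOpt N q 0 ≤ guessA N q 0 (zigzag N) :=
      Finset.inf'_le _ (Finset.mem_univ _)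
    have h1 : guessA N q 0 (zigzag N) ≤ ∑ i ∈ range N, (↑(i/2 + 1) : ℝ) * g i := by
      unfold guessA
      rw [Fintype.sum_bool]
      rw [hre]
      have ht : (Finset.univ.inf' ⟨1, Finset.mem_univ 1⟩
          (fun σ : Equiv.Perm (Fin N) => ∑ k : Fin N,
            ((k : ℝ) + 1) * q (σ k) * (if ((σ k ∈ zigzag N) ↔ (true = true)) then 1 - (0:ℝ) else 0)))
          ≤ ∑ t ∈ range ((N+1)/2), ((t : ℝ) + 1) * g (2*t) := by
        rw [← hvtrue]
        exact Finset.inf'_le _ (Finset.mem_univ σe)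
      have hf : (Finset.univ.inf' ⟨1, Finset.mem_univ 1⟩
          (fun σ : Equiv.Perm (Fin N) => ∑ k : Fin N,
            ((k : ℝ) + 1) * q (σ k) * (if ((σ k ∈ zigzag N) ↔ (false = true)) then 1 - (0:ℝ) else 0)))
          ≤ ∑ t ∈ range (N/2), ((t : ℝ) + 1) * g (2*t+1) := by
        rw [← hvfalse]
        exact Finset.inf'_le _ (Finset.mem_univ σo)
      linarith
    have h2 : ∑ i ∈ range N, (↑(i/2 + 1) : ℝ) * g i
        ≤ ∑ i ∈ range N, (((i:ℝ) + 2)/2) * g i := by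
      apply Finset.sum_le_sum
      intro i _
      apply mul_le_mul_of_nonneg_right _ (gnn i)
      have hh : (2 * (i/2 + 1) : ℕ) ≤ i + 2 := by omega
      have := (Nat.cast_le (α := ℝ)).mpr hh
      push_cast at this ⊢
      linarith
    have h3 : ∑ i ∈ range N, (((i:ℝ) + 2)/2) * g i
        = (∑ i ∈ range N, ((i:ℝ) + 1) * g i) / 2 + 1/2 := by
      rw [Finset.sum_div]
      have : ∀ i ∈ range N, (((i:ℝ) + 2)/2) * g i = ((i:ℝ) + 1) * g i / 2 + g i / 2 := by
        intro i _; ring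
      rw [Finset.sum_congr rfl this, Finset.sum_add_distrib, ← Finset.sum_div,
        ← Finset.sum_div, gsum]
    have h4 : (∑ i ∈ range N, ((i:ℝ) + 1) * g i) / 2 + 1/2 ≤ guess N q / 2 + 1/2 := by
      linarith
    linarith
  -- even-indexed mass at least 1/2
  have hE : (1:ℝ)/2 ≤ ∑ t ∈ range ((N+1)/2), g (2*t) := by
    have hsplit := lem_reindex g N
    rw [gsum] at hsplit
    have hO : ∑ t ∈ range (N/2), g (2*t+1) ≤ ∑ t ∈ range ((N+1)/2), g (2*t) := by
      calc ∑ t ∈ range (N/2), g (2*t+1) ≤ ∑ t ∈ range (N/2), g (2*t) :=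
            Finset.sum_le_sum (fun t _ => gmono _ _ (by omega))
        _ ≤ ∑ t ∈ range ((N+1)/2), g (2*t) :=
            Finset.sum_le_sum_of_subset_of_nonneg
              (Finset.range_subset_range.mpr (by omega)) (fun i _ _ => gnn _)
    linarith
  -- Shalf is at least S1/2 + 1/4
  have hhalfcmp : (∑ i ∈ range N, ((i:ℝ)+1) * g i)/2 + 1/4
      ≤ ∑ i ∈ range N, (↑(i/2 + 1) : ℝ) * g i := by
    have hre2 : (∑ i ∈ range N, ((i:ℝ)+1) * g i)
        = ∑ t ∈ range ((N+1)/2), (((2*t : ℕ):ℝ) + 1) * g (2*t)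
          + ∑ t ∈ range (N/2), (((2*t+1 : ℕ):ℝ) + 1) * g (2*t+1) := by
      rw [lem_reindex (fun i => ((i:ℝ)+1) * g i) N]
    have hA1 : ∑ t ∈ range ((N+1)/2), ((t:ℝ)+1) * g (2*t)
        = (∑ t ∈ range ((N+1)/2), (((2*t : ℕ):ℝ)+1) * g (2*t))/2
          + (∑ t ∈ range ((N+1)/2), g (2*t))/2 := by
      rw [Finset.sum_div, Finset.sum_div, ← Finset.sum_add_distrib]
      apply Finset.sum_congr rfl
      intro t _
      push_cast
      ring
    have hA2 : ∑ t ∈ range (N/2), ((t:ℝ)+1) * g (2*t+1)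
        = (∑ t ∈ range (N/2), (((2*t+1 : ℕ):ℝ)+1) * g (2*t+1))/2 := by
      rw [Finset.sum_div]
      apply Finset.sum_congr rfl
      intro t _
      push_cast
      ring
    have hOnn : 0 ≤ ∑ t ∈ range (N/2), g (2*t+1) :=
      Finset.sum_nonneg (fun t _ => gnn _)
    rw [hre, hre2, hA1, hA2]
    linarith
  -- lower bound
  have hlower : guess N q / 2 + 1/4 ≤ guessOpt N q 0 := by
    apply Finset.le_inf'
    intro A _
    obtain ⟨σ₁, -, hσ₁⟩ := Finset.exists_mem_eq_inf'
      (⟨1, Finset.mem_univ 1⟩ : (Finset.univ : Finset (Equiv.Perm (Fin N))).Nonempty)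
      (fun σ : Equiv.Perm (Fin N) => ∑ k : Fin N,
        ((k : ℝ) + 1) * q (σ k) * (if ((σ k ∈ A) ↔ (true = true)) then 1 - (0:ℝ) else 0))
    obtain ⟨σ₂, -, hσ₂⟩ := Finset.exists_mem_eq_inf'
      (⟨1, Finset.mem_univ 1⟩ : (Finset.univ : Finset (Equiv.Perm (Fin N))).Nonempty)
      (fun σ : Equiv.Perm (Fin N) => ∑ k : Fin N,
        ((k : ℝ) + 1) * q (σ k) * (if ((σ k ∈ A) ↔ (false = true)) then 1 - (0:ℝ) else 0))
    unfold guessA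
    rw [Fintype.sum_bool, hσ₁, hσ₂]
    set c : Fin N → ℕ := fun i =>
      if i ∈ A then ((σ₁⁻¹ i : Fin N) : ℕ) + 1 else ((σ₂⁻¹ i : Fin N) : ℕ) + 1 with hcdef
    set C : ℕ → ℕ := fun i => if h : i < N then c ⟨i, h⟩ else 1 with hCdef
    have hceq : (∑ k : Fin N, ((k : ℝ) + 1) * q (σ₁ k)
          * (if ((σ₁ k ∈ A) ↔ (true = true)) then 1 - (0:ℝ) else 0))
        + (∑ k : Fin N, ((k : ℝ) + 1) * q (σ₂ k)
          * (if ((σ₂ k ∈ A) ↔ (false = true)) then 1 - (0:ℝ) else 0))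
        = ∑ i ∈ range N, (C i : ℝ) * g i := by
      have h1 : (∑ k : Fin N, ((k : ℝ) + 1) * q (σ₁ k)
            * (if ((σ₁ k ∈ A) ↔ (true = true)) then 1 - (0:ℝ) else 0))
          = ∑ i : Fin N, (((σ₁⁻¹ i : Fin N) : ℝ) + 1) * q i * (if i ∈ A then 1 else 0) := by
        rw [← Equiv.sum_comp σ₁
          (fun i => (((σ₁⁻¹ i : Fin N) : ℝ) + 1) * q i * (if i ∈ A then 1 else 0))]
        apply Finset.sum_congr rfl
        intro k _
        simp only [Equiv.Perm.inv_def, Equiv.symm_apply_apply]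
        norm_num
      have h2 : (∑ k : Fin N, ((k : ℝ) + 1) * q (σ₂ k)
            * (if ((σ₂ k ∈ A) ↔ (false = true)) then 1 - (0:ℝ) else 0))
          = ∑ i : Fin N, (((σ₂⁻¹ i : Fin N) : ℝ) + 1) * q i * (if i ∉ A then 1 else 0) := by
        rw [← Equiv.sum_comp σ₂
          (fun i => (((σ₂⁻¹ i : Fin N) : ℝ) + 1) * q i * (if i ∉ A then 1 else 0))]
        apply Finset.sum_congr rfl
        intro k _
        simp only [Equiv.Perm.inv_def, Equiv.symm_apply_apply]
        by_cases h : σ₂ k ∈ A <;> simp [h]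
      rw [h1, h2, ← Finset.sum_add_distrib]
      have h3 : ∀ i : Fin N, (((σ₁⁻¹ i : Fin N):ℝ)+1) * q i * (if i ∈ A then 1 else 0)
          + (((σ₂⁻¹ i : Fin N):ℝ)+1) * q i * (if i ∉ A then 1 else 0) = (c i : ℝ) * q i := by
        intro i
        by_cases hi : i ∈ A
        · simp only [hcdef, if_pos hi, if_neg (not_not_intro hi)]
          push_cast
          ring
        · simp only [hcdef, if_neg hi, if_pos hi]
          push_cast
          ring
      rw [Finset.sum_congr rfl (fun i _ => h3 i)]
      rw [← Fin.sum_univ_eq_sum_range (fun i => (C i:ℝ) * g i) N]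
      apply Finset.sum_congr rfl
      intro k _
      rw [gq]
      congr 2
      simp only [hCdef, k.isLt, dif_pos, Fin.eta]
    have hCN : ∀ i ∈ range N, C i ≤ N := by
      intro i hi
      simp only [Finset.mem_range] at hi
      simp only [hCdef, dif_pos hi, hcdef]
      split_ifs with h
      · exact Nat.succ_le_of_lt (Fin.isLt _)
      · exact Nat.succ_le_of_lt (Fin.isLt _)
    have hcard : ∀ t : ℕ, ((range N).filter (fun i => C i ≤ t)).card ≤ 2*t := by
      intro t
      have hmaps : ∀ i ∈ (range N).filter (fun i => C i ≤ t),
          (fun i => ((if h : i < N then decide ((⟨i, h⟩ : Fin N) ∈ A) else true), C i)) i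
            ∈ (Finset.univ : Finset Bool) ×ˢ Finset.Icc 1 t := by
        intro i hi
        simp only [Finset.mem_filter, Finset.mem_range] at hi
        simp only [Finset.mem_product, Finset.mem_univ, Finset.mem_Icc, true_and]
        refine ⟨?_, hi.2⟩
        simp only [hCdef, dif_pos hi.1, hcdef]
        split_ifs <;> omega
      have hinj : Set.InjOn (fun i => ((if h : i < N then decide ((⟨i, h⟩ : Fin N) ∈ A)
          else true), C i)) ((range N).filter (fun i => C i ≤ t)) := by
        intro i hi j hj hij
        simp only [Finset.coe_filter, Set.mem_setOf_eq, Finset.mem_range] at hi hj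
        simp only [Prod.mk.injEq, dif_pos hi.1, dif_pos hj.1] at hij
        obtain ⟨hb, hC⟩ := hij
        have hb' : ((⟨i, hi.1⟩ : Fin N) ∈ A) ↔ ((⟨j, hj.1⟩ : Fin N) ∈ A) := by
          constructor <;> intro h <;> simp [h] at hb <;>
            · by_contra hc
              simp [hc] at hb
        simp only [hCdef, dif_pos hi.1, dif_pos hj.1, hcdef] at hC
        by_cases hiA : (⟨i, hi.1⟩ : Fin N) ∈ A
        · have hjA : (⟨j, hj.1⟩ : Fin N) ∈ A := hb'.mp hiA
          rw [if_pos hiA, if_pos hjA] at hC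
          have : σ₁⁻¹ (⟨i, hi.1⟩ : Fin N) = σ₁⁻¹ (⟨j, hj.1⟩ : Fin N) :=
            Fin.ext (by omega)
          have := (Equiv.injective σ₁⁻¹) this
          have := congrArg Fin.val this
          simpa using this
        · have hjA : (⟨j, hj.1⟩ : Fin N) ∉ A := fun h => hiA (hb'.mpr h)
          rw [if_neg hiA, if_neg hjA] at hC
          have : σ₂⁻¹ (⟨i, hi.1⟩ : Fin N) = σ₂⁻¹ (⟨j, hj.1⟩ : Fin N) :=
            Fin.ext (by omega)
          have := (Equiv.injective σ₂⁻¹) this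
          have := congrArg Fin.val this
          simpa using this
      have hcle := Finset.card_le_card_of_injOn _ hmaps hinj
      have : ((Finset.univ : Finset Bool) ×ˢ Finset.Icc 1 t).card = 2 * t := by
        rw [Finset.card_product, Nat.card_Icc]
        simp
      omega
    have hkey := lem_key g gmono gnn N C hCN hcard
    rw [hceq]
    linarith
  exact ⟨hlower, hupper⟩
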